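/- arXiv:2509.01685 — 2 statements merged into one kernel-verified Lean document; each statement's English description precedes it below -/
import Mathlib

section
/- Suppose ρ_k = N(μ_k, Σ_k) is a Gaussian on ℝ^d, V(x) = ½ xᵀ Σ^{-1} x with Σ symmetric positive definite, M symmetric positive definite, T > 0, β > 0. Then the measure with density x ↦ ∫ K_M(x,y) ρ_k(y) dy, where K_M(x,y) = exp(-β/2 (V(x) + ‖x-y‖²_M/(2T))) / ∫ exp(-β/2 (V(z) + ‖z-y‖²_M/(2T))) dz, is the Gaussian N(μ̃_k, Σ̃_k) with μ̃_k = (I + T M Σ^{-1})^{-1} μ_k and Σ̃_k = 2β^{-1}T (TΣ^{-1} + M^{-1})^{-1} + (TΣ^{-1} + M^{-1})^{-1} M^{-1} Σ_k M^{-1} (TΣ^{-1} + M^{-1})^{-1}. -/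
open Matrix MeasureTheory Real

/- ===== auxiliary lemmas ===== -/

lemma psd_det_nonneg {d : ℕ} {A : Matrix (Fin d) (Fin d) ℝ} (hA : A.PosSemidef) :
    0 ≤ A.det := by
  rw [hA.isHermitian.det_eq_prod_eigenvalues]
  exact Finset.prod_nonneg fun i _ => hA.eigenvalues_nonneg i

lemma symm_of_herm {d : ℕ} {A : Matrix (Fin d) (Fin d) ℝ} (hA : A.IsHermitian) : Aᵀ = A := by
  simpa [Matrix.conjTranspose_eq_transpose_of_trivial] using hA.eq

lemma herm_of_symm {d : ℕ} {A : Matrix (Fin d) (Fin d) ℝ} (hA : Aᵀ = A) : Aᴴ = A := by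
  rw [Matrix.conjTranspose_eq_transpose_of_trivial, hA]

lemma dp_lin {d : ℕ} (N : Matrix (Fin d) (Fin d) ℝ) (hNs : Nᵀ = N) (b u : Fin d → ℝ) :
    b ⬝ᵥ (N *ᵥ u) = (N *ᵥ b) ⬝ᵥ u := by
  rw [Matrix.dotProduct_mulVec, ← Matrix.vecMul_transpose, hNs]

lemma dp_symm {d : ℕ} {A : Matrix (Fin d) (Fin d) ℝ} (hA : Aᵀ = A) (x y : Fin d → ℝ) :
    x ⬝ᵥ (A *ᵥ y) = y ⬝ᵥ (A *ᵥ x) := by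
  rw [Matrix.dotProduct_mulVec, dotProduct_comm, ← Matrix.vecMul_transpose, hA]

lemma quad_comp {d : ℕ} (N Q : Matrix (Fin d) (Fin d) ℝ) (hNs : Nᵀ = N) (u : Fin d → ℝ) :
    (N *ᵥ u) ⬝ᵥ (Q *ᵥ (N *ᵥ u)) = u ⬝ᵥ ((N * Q * N) *ᵥ u) := by
  conv_rhs => rw [mul_assoc, ← Matrix.mulVec_mulVec, dp_lin N hNs, ← Matrix.mulVec_mulVec]

lemma quad_comp' {d : ℕ} (N Q : Matrix (Fin d) (Fin d) ℝ) (u : Fin d → ℝ) :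
    (N *ᵥ u) ⬝ᵥ (Q *ᵥ (N *ᵥ u)) = u ⬝ᵥ ((Nᵀ * Q * N) *ᵥ u) := by
  rw [Matrix.mulVec_mulVec, Matrix.dotProduct_mulVec, Matrix.dotProduct_mulVec u]
  congr 1
  rw [← Matrix.vecMul_transpose, Matrix.vecMul_vecMul, ← mul_assoc]

lemma expand_quad {d : ℕ} {A : Matrix (Fin d) (Fin d) ℝ} (hA : Aᵀ = A) (u w : Fin d → ℝ) :
    (u - w) ⬝ᵥ (A *ᵥ (u - w))
      = u ⬝ᵥ (A *ᵥ u) - 2 * (u ⬝ᵥ (A *ᵥ w)) + w ⬝ᵥ (A *ᵥ w) := by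
  rw [Matrix.mulVec_sub, sub_dotProduct, dotProduct_sub, dotProduct_sub,
    dp_symm hA w u]
  ring

lemma posDef_smul {d : ℕ} {A : Matrix (Fin d) (Fin d) ℝ} (hA : A.PosDef) {c : ℝ} (hc : 0 < c) :
    (c • A).PosDef := by
  refine ⟨?_, fun x hx => ?_⟩
  · unfold Matrix.IsHermitian
    rw [Matrix.conjTranspose_smul]
    rw [hA.isHermitian.eq, star_trivial]
  · exact (hA.smul hc).2 hx

lemma const_id (a b c e : ℝ) (ha : a ≠ 0) (hb : b ≠ 0) (hc : c ≠ 0) (he : e ≠ 0) :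
    (a * e⁻¹)⁻¹ * (a⁻¹ * b⁻¹) * (a * c⁻¹) = a⁻¹ * (b * c * e⁻¹)⁻¹ := by
  field_simp

lemma exp_div_mul (Kq Ks a f e : ℝ) :
    Real.exp a / (Kq * Real.exp f) * (Ks * Real.exp e)
      = (Kq⁻¹ * Ks) * Real.exp (a - f + e) := by
  rcases eq_or_ne Kq 0 with h | h
  · simp [h]
  · rw [Real.exp_add, Real.exp_sub]
    field_simp

lemma gauss1 (c : ℝ) : ∫ v : ℝ, Real.exp (-(1/2) * v^2 + c*v)
    = Real.sqrt (2*π) * Real.exp (c^2/2) := by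
  have h1 : ∀ v : ℝ, -(1/2) * v^2 + c*v = -(1/2) * (v - c)^2 + c^2/2 := by intro v; ring
  simp_rw [h1, Real.exp_add, integral_mul_const]
  rw [integral_sub_right_eq_self (fun v => Real.exp (-(1/2) * v^2)) c]
  have := integral_gaussian (1/2)
  simp_rw [neg_mul] at this ⊢
  rw [this]
  norm_num [mul_comm]

open scoped MatrixOrder in
lemma gaussA {d : ℕ} {Q : Matrix (Fin d) (Fin d) ℝ} (hQ : Q.PosDef) (b : Fin d → ℝ) :
    ∫ x : Fin d → ℝ, Real.exp (-(1/2) * (x ⬝ᵥ (Q *ᵥ x)) + b ⬝ᵥ x)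
      = (2*π) ^ ((d:ℝ)/2) * Q.det ^ (-(1:ℝ)/2) * Real.exp ((1/2) * (b ⬝ᵥ (Q⁻¹ *ᵥ b))) := by
  have hdetQ : 0 < Q.det := hQ.det_pos
  have hQi : (Q⁻¹).PosDef := hQ.inv
  set N := CFC.sqrt (Q⁻¹) with hN
  have hNpsd : N.PosSemidef := (CFC.sqrt_nonneg _).posSemidef
  have hNN : N * N = Q⁻¹ := CFC.sqrt_mul_sqrt_self _ hQi.posSemidef.nonneg
  have hNs : Nᵀ = N := symm_of_herm hNpsd.isHermitian
  have hdetQi : 0 < (Q⁻¹).det := hQi.det_pos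
  have hdet2 : N.det * N.det = (Q⁻¹).det := by rw [← Matrix.det_mul, hNN]
  have hdetN : 0 < N.det := by
    rcases (psd_det_nonneg hNpsd).lt_or_eq with h | h
    · exact h
    · exfalso; nlinarith
  have hNQN : N * Q * N = 1 := by
    have h1 : N * (N * Q) = 1 := by
      rw [← mul_assoc, hNN, Matrix.nonsing_inv_mul Q hdetQ.ne'.isUnit]
    have hNinv : N⁻¹ = N * Q := Matrix.inv_eq_right_inv h1
    calc N * Q * N = N⁻¹ * N := by rw [hNinv]
    _ = 1 := Matrix.nonsing_inv_mul N hdetN.ne'.isUnit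
  have hcont : Continuous fun x : Fin d → ℝ =>
      Real.exp (-(1/2) * (x ⬝ᵥ (Q *ᵥ x)) + b ⬝ᵥ x) := by
    simp only [dotProduct, Matrix.mulVec]
    fun_prop
  have hmap := Real.map_matrix_volume_pi_eq_smul_volume_pi (M := N) hdetN.ne'
  have hlin : Continuous (Matrix.toLin' N) := LinearMap.continuous_on_pi _
  have key : (∫ x : Fin d → ℝ, Real.exp (-(1/2) * (x ⬝ᵥ (Q *ᵥ x)) + b ⬝ᵥ x))
      = N.det * ∫ u : Fin d → ℝ,
          Real.exp (-(1/2) * ((N *ᵥ u) ⬝ᵥ (Q *ᵥ (N *ᵥ u))) + b ⬝ᵥ (N *ᵥ u)) := by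
    have h2 : (∫ u : Fin d → ℝ,
          Real.exp (-(1/2) * ((N *ᵥ u) ⬝ᵥ (Q *ᵥ (N *ᵥ u))) + b ⬝ᵥ (N *ᵥ u)))
        = ∫ y, Real.exp (-(1/2) * (y ⬝ᵥ (Q *ᵥ y)) + b ⬝ᵥ y)
            ∂(Measure.map (Matrix.toLin' N) volume) := by
      rw [integral_map hlin.aemeasurable hcont.aestronglyMeasurable]
      simp_rw [Matrix.toLin'_apply]
    rw [h2, hmap, integral_smul_measure, ENNReal.toReal_ofReal (abs_nonneg _),
      abs_of_pos (inv_pos.2 hdetN), smul_eq_mul, ← mul_assoc,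
      mul_inv_cancel₀ hdetN.ne', one_mul]
  rw [key]
  have hinner : ∀ u : Fin d → ℝ,
      Real.exp (-(1/2) * ((N *ᵥ u) ⬝ᵥ (Q *ᵥ (N *ᵥ u))) + b ⬝ᵥ (N *ᵥ u))
        = ∏ i, Real.exp (-(1/2) * (u i)^2 + (N *ᵥ b) i * u i) := by
    intro u
    rw [quad_comp N Q hNs, hNQN, Matrix.one_mulVec, dp_lin N hNs, ← Real.exp_sum]
    congr 1
    simp only [dotProduct, Finset.mul_sum, ← Finset.sum_add_distrib]
    congr 1 with i
    ring
  simp_rw [hinner]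
  rw [integral_fintype_prod_volume_eq_prod
    (f := fun i (v : ℝ) => Real.exp (-(1/2) * v^2 + (N *ᵥ b) i * v))]
  simp_rw [gauss1]
  rw [Finset.prod_mul_distrib, Finset.prod_const, ← Real.exp_sum]
  have hsum : ∑ i, ((N *ᵥ b) i)^2 / 2 = (1/2) * (b ⬝ᵥ (Q⁻¹ *ᵥ b)) := by
    have : (N *ᵥ b) ⬝ᵥ (N *ᵥ b) = b ⬝ᵥ (Q⁻¹ *ᵥ b) := by
      rw [dp_lin N hNs (N *ᵥ b) b, Matrix.mulVec_mulVec, hNN, dotProduct_comm,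
        Matrix.dotProduct_mulVec, ← Matrix.mulVec_transpose,
        symm_of_herm hQi.isHermitian]
    rw [← this]
    simp only [dotProduct]
    rw [Finset.mul_sum]
    exact Finset.sum_congr rfl fun i _ => by ring
  rw [hsum]
  have hNdet : N.det = Q.det ^ (-(1:ℝ)/2) := by
    have hQinv_det : (Q⁻¹).det = Q.det⁻¹ := by
      rw [Matrix.det_nonsing_inv, Ring.inverse_eq_inv']
    have h3 : N.det = Real.sqrt (Q.det⁻¹) := by
      rw [← hQinv_det, ← hdet2, Real.sqrt_mul_self hdetN.le]
    rw [h3, Real.sqrt_eq_rpow, ← Real.rpow_neg_one Q.det, ← Real.rpow_mul hdetQ.le]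
    norm_num
  have hsqrt : Real.sqrt (2*π) ^ (d:ℕ) = (2*π) ^ ((d:ℝ)/2) := by
    rw [Real.sqrt_eq_rpow, ← Real.rpow_natCast ((2*π) ^ ((1:ℝ)/2)) d,
      ← Real.rpow_mul (by positivity)]
    congr 1
    ring
  rw [Finset.card_fin, hNdet, hsqrt]
  ring


/-- Density of the multivariate Gaussian `N(m, S)` on `ℝ^d`. -/
noncomputable def gaussPDF {d : ℕ} (m : Fin d → ℝ) (S : Matrix (Fin d) (Fin d) ℝ)
    (x : Fin d → ℝ) : ℝ :=
  (2 * Real.pi) ^ (-(d : ℝ) / 2) * S.det ^ (-(1 : ℝ) / 2) *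
    Real.exp (-(1 / 2) * ((x - m) ⬝ᵥ (S⁻¹ *ᵥ (x - m))))

/-- The normalized kernel `K_M(x,y)` for the quadratic potential `V(x) = ½xᵀΣ⁻¹x`. -/
noncomputable def kerKM {d : ℕ} (S M : Matrix (Fin d) (Fin d) ℝ) (T β : ℝ)
    (x y : Fin d → ℝ) : ℝ :=
  Real.exp (-(β / 2) * ((1 / 2) * (x ⬝ᵥ (S⁻¹ *ᵥ x)) +
      ((x - y) ⬝ᵥ (M⁻¹ *ᵥ (x - y))) / (2 * T))) /
    ∫ z : Fin d → ℝ, Real.exp (-(β / 2) * ((1 / 2) * (z ⬝ᵥ (S⁻¹ *ᵥ z)) +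
      ((z - y) ⬝ᵥ (M⁻¹ *ᵥ (z - y))) / (2 * T)))

set_option maxHeartbeats 2000000 in
/-- The preconditioned regularized Wasserstein proximal of the Gaussian `ρ_k = N(μ_k, Σ_k)`
for the quadratic potential `V(x) = ½xᵀΣ⁻¹x`, i.e. the measure with density
`x ↦ ∫ K_M(x,y) ρ_k(y) dy`, is the Gaussian `N(μ̃_k, Σ̃_k)` with
`μ̃_k = (I + TMΣ⁻¹)⁻¹ μ_k` and
`Σ̃_k = 2β⁻¹T(TΣ⁻¹+M⁻¹)⁻¹ + (TΣ⁻¹+M⁻¹)⁻¹M⁻¹Σ_kM⁻¹(TΣ⁻¹+M⁻¹)⁻¹`. -/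
theorem prwpo_of_gaussian {d : ℕ}
    (S M Sk : Matrix (Fin d) (Fin d) ℝ) (hS : S.PosDef) (hM : M.PosDef) (hSk : Sk.PosDef)
    (T β : ℝ) (hT : 0 < T) (hβ : 0 < β) (μk : Fin d → ℝ) (x : Fin d → ℝ) :
    (∫ y : Fin d → ℝ, kerKM S M T β x y * gaussPDF μk Sk y) =
      gaussPDF ((1 + T • (M * S⁻¹))⁻¹ *ᵥ μk)
        ((2 * β⁻¹ * T) • (T • S⁻¹ + M⁻¹)⁻¹ +
          (T • S⁻¹ + M⁻¹)⁻¹ * M⁻¹ * Sk * M⁻¹ * (T • S⁻¹ + M⁻¹)⁻¹) x := by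
  classical
  set k : ℝ := β / (2*T) with hk
  have hk0 : 0 < k := by rw [hk]; positivity
  have hβ2 : 0 < β/2 := by positivity
  set C : Matrix (Fin d) (Fin d) ℝ := k • M⁻¹ with hC
  set Q : Matrix (Fin d) (Fin d) ℝ := (β/2) • S⁻¹ + k • M⁻¹ with hQdef
  have hQ : Q.PosDef := (posDef_smul hS.inv hβ2).add (posDef_smul hM.inv hk0)
  have hCpd : C.PosDef := posDef_smul hM.inv hk0
  have hMis : M⁻¹ᵀ = M⁻¹ := symm_of_herm hM.inv.isHermitian
  have hSkis : Sk⁻¹ᵀ = Sk⁻¹ := symm_of_herm hSk.inv.isHermitian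
  have hCs : Cᵀ = C := symm_of_herm hCpd.isHermitian
  have hQs : Qᵀ = Q := symm_of_herm hQ.isHermitian
  have hQis : Q⁻¹ᵀ = Q⁻¹ := symm_of_herm hQ.inv.isHermitian
  set R : Matrix (Fin d) (Fin d) ℝ := C * Q⁻¹ * C + Sk⁻¹ with hRdef
  have hCQCpsd : (C * Q⁻¹ * C).PosSemidef := by
    have h := hQ.inv.posSemidef.mul_mul_conjTranspose_same C
    rwa [herm_of_symm hCs] at h
  have hR : R.PosDef := Matrix.PosDef.posSemidef_add hCQCpsd hSk.inv
  have hRis : R⁻¹ᵀ = R⁻¹ := symm_of_herm hR.inv.isHermitian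
  set W : Matrix (Fin d) (Fin d) ℝ := Q - C * R⁻¹ * C with hWdef
  have hWs : Wᵀ = W := by
    rw [hWdef, Matrix.transpose_sub, hQs, Matrix.transpose_mul, Matrix.transpose_mul, hCs,
      hRis, ← mul_assoc]
  -- determinant units and cancellation helpers
  have hQu : IsUnit Q.det := hQ.det_pos.ne'.isUnit
  have hRu : IsUnit R.det := hR.det_pos.ne'.isUnit
  have hSku : IsUnit Sk.det := hSk.det_pos.ne'.isUnit
  have hMu : IsUnit M.det := hM.det_pos.ne'.isUnit
  have bQ : Q⁻¹ * Q = 1 := Matrix.nonsing_inv_mul Q hQu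
  have bQ' : Q * Q⁻¹ = 1 := Matrix.mul_nonsing_inv Q hQu
  have bR : R * R⁻¹ = 1 := Matrix.mul_nonsing_inv R hRu
  have bR' : R⁻¹ * R = 1 := Matrix.nonsing_inv_mul R hRu
  have bSk : Sk * Sk⁻¹ = 1 := Matrix.mul_nonsing_inv Sk hSku
  have bSk' : Sk⁻¹ * Sk = 1 := Matrix.nonsing_inv_mul Sk hSku
  have bM : M * M⁻¹ = 1 := Matrix.mul_nonsing_inv M hMu
  have cQ : ∀ X : Matrix (Fin d) (Fin d) ℝ, Q⁻¹ * (Q * X) = X := fun X => by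
    rw [← mul_assoc, bQ, one_mul]
  have cQ' : ∀ X : Matrix (Fin d) (Fin d) ℝ, Q * (Q⁻¹ * X) = X := fun X => by
    rw [← mul_assoc, bQ', one_mul]
  have cR : ∀ X : Matrix (Fin d) (Fin d) ℝ, R * (R⁻¹ * X) = X := fun X => by
    rw [← mul_assoc, bR, one_mul]
  have cR' : ∀ X : Matrix (Fin d) (Fin d) ℝ, R⁻¹ * (R * X) = X := fun X => by
    rw [← mul_assoc, bR', one_mul]
  have cSk : ∀ X : Matrix (Fin d) (Fin d) ℝ, Sk * (Sk⁻¹ * X) = X := fun X => by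
    rw [← mul_assoc, bSk, one_mul]
  have hCQC0 : C * (Q⁻¹ * C) = R - Sk⁻¹ := by
    rw [← mul_assoc, hRdef, add_sub_cancel_right]
  have hCQC : ∀ X : Matrix (Fin d) (Fin d) ℝ,
      C * (Q⁻¹ * (C * X)) = R * X - Sk⁻¹ * X := fun X => by
    calc C * (Q⁻¹ * (C * X)) = (C * (Q⁻¹ * C)) * X := by simp only [mul_assoc]
    _ = (R - Sk⁻¹) * X := by rw [hCQC0]
    _ = R * X - Sk⁻¹ * X := by rw [sub_mul]
  -- the three Woodbury-type identities
  have idW : (Q⁻¹ + Q⁻¹ * C * Sk * C * Q⁻¹) * W = 1 := by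
    simp only [hWdef, mul_sub, sub_mul, mul_add, add_mul, mul_assoc, hCQC, hCQC0,
      cQ, cQ', cR, cR', cSk, bQ, bQ', bR, bR', bSk, bSk', mul_one, one_mul]
    abel
  have id3 : W * (Q⁻¹ * C) = C * (R⁻¹ * Sk⁻¹) := by
    simp only [hWdef, mul_sub, sub_mul, mul_add, add_mul, mul_assoc, hCQC, hCQC0,
      cQ, cQ', cR, cR', cSk, bQ, bQ', bR, bR', bSk, bSk', mul_one, one_mul]
    abel
  have id4 : C * Q⁻¹ * W * (Q⁻¹ * C) = Sk⁻¹ - Sk⁻¹ * R⁻¹ * Sk⁻¹ := by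
    simp only [hWdef, mul_sub, sub_mul, mul_add, add_mul, mul_assoc, hCQC, hCQC0,
      cQ, cQ', cR, cR', cSk, bQ, bQ', bR, bR', bSk, bSk', mul_one, one_mul]
    abel
  -- determinant identity
  have hQidet : (Q⁻¹).det = Q.det⁻¹ := by
    rw [Matrix.det_nonsing_inv, Ring.inverse_eq_inv']
  have hdetRel : Sk.det * R.det = Q.det⁻¹ * (Q + C * Sk * C).det := by
    have h1 : Sk * R = 1 + (Sk * C) * (Q⁻¹ * C) := by
      rw [hRdef, mul_add, bSk, ← mul_assoc, ← mul_assoc, add_comm]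
      simp only [mul_assoc]
    have h2 : (1 : Matrix (Fin d) (Fin d) ℝ) + (Q⁻¹ * C) * (Sk * C)
        = Q⁻¹ * (Q + C * Sk * C) := by
      rw [mul_add, bQ]
      simp only [mul_assoc]
    calc Sk.det * R.det = ((1 + (Sk * C) * (Q⁻¹ * C)).det) := by
          rw [← Matrix.det_mul, h1]
    _ = ((1 + (Q⁻¹ * C) * (Sk * C)).det) := Matrix.det_one_add_mul_comm _ _
    _ = Q.det⁻¹ * (Q + C * Sk * C).det := by rw [h2, Matrix.det_mul, hQidet]
  have hSdet : (Q⁻¹ + Q⁻¹ * C * Sk * C * Q⁻¹).det = Sk.det * R.det * Q.det⁻¹ := by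
    have h3 : Q⁻¹ + Q⁻¹ * C * Sk * C * Q⁻¹ = Q⁻¹ * (Q + C * Sk * C) * Q⁻¹ := by
      simp only [mul_add, add_mul, mul_assoc, cQ, cQ', bQ, bQ', one_mul, mul_one]
    rw [h3, Matrix.det_mul, Matrix.det_mul, hQidet, hdetRel]
  -- relating the statement's matrices to Q, C
  have hP : T • S⁻¹ + M⁻¹ = k⁻¹ • Q := by
    rw [hQdef, smul_add, smul_smul, smul_smul, inv_mul_cancel₀ hk0.ne', one_smul]
    congr 1
    have hkk : k⁻¹ * (β/2) = T := by
      rw [hk]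
      field_simp
    rw [hkk]
  have hPinv : (T • S⁻¹ + M⁻¹)⁻¹ = k • Q⁻¹ := by
    apply Matrix.inv_eq_right_inv
    rw [hP, smul_mul_assoc, mul_smul_comm, smul_smul, bQ', inv_mul_cancel₀ hk0.ne', one_smul]
  have hm : (1 + T • (M * S⁻¹))⁻¹ = Q⁻¹ * C := by
    apply Matrix.inv_eq_right_inv
    have h4 : (1 : Matrix (Fin d) (Fin d) ℝ) + T • (M * S⁻¹) = M * (T • S⁻¹ + M⁻¹) := by
      rw [mul_add, mul_smul_comm, bM, add_comm]
    rw [h4, hP, hC]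
    simp only [mul_smul_comm, smul_mul_assoc, smul_smul, mul_assoc, cQ', bM]
    rw [mul_inv_cancel₀ hk0.ne', one_smul]
  have hSeq : (2 * β⁻¹ * T) • (T • S⁻¹ + M⁻¹)⁻¹ +
      (T • S⁻¹ + M⁻¹)⁻¹ * M⁻¹ * Sk * M⁻¹ * (T • S⁻¹ + M⁻¹)⁻¹
      = Q⁻¹ + Q⁻¹ * C * Sk * C * Q⁻¹ := by
    rw [hPinv]
    have h5 : (2 * β⁻¹ * T) * k = 1 := by
      rw [hk]; field_simp
    congr 1
    · rw [smul_smul, h5, one_smul]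
    · rw [hC]
      simp only [smul_mul_assoc, mul_smul_comm, smul_smul, mul_assoc]
  have hT0 : T ≠ 0 := hT.ne'
  have e2 : ∀ z : Fin d → ℝ, z ⬝ᵥ (Q *ᵥ z)
      = (β/2) * (z ⬝ᵥ (S⁻¹ *ᵥ z)) + k * (z ⬝ᵥ (M⁻¹ *ᵥ z)) := by
    intro z
    rw [hQdef, Matrix.add_mulVec, dotProduct_add, Matrix.smul_mulVec,
      Matrix.smul_mulVec, dotProduct_smul, dotProduct_smul,
      smul_eq_mul, smul_eq_mul]
  -- closed form of the normalizing denominator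
  have hden : ∀ y : Fin d → ℝ,
      (∫ z : Fin d → ℝ, Real.exp (-(β / 2) * ((1 / 2) * (z ⬝ᵥ (S⁻¹ *ᵥ z)) +
        ((z - y) ⬝ᵥ (M⁻¹ *ᵥ (z - y))) / (2 * T))))
      = (2*π) ^ ((d:ℝ)/2) * Q.det ^ (-(1:ℝ)/2)
        * Real.exp ((1/2) * (y ⬝ᵥ ((C * Q⁻¹ * C) *ᵥ y))
            + -((k/2) * (y ⬝ᵥ (M⁻¹ *ᵥ y)))) := by
    intro y
    have hexp1 : ∀ z : Fin d → ℝ, Real.exp (-(β / 2) * ((1 / 2) * (z ⬝ᵥ (S⁻¹ *ᵥ z)) +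
          ((z - y) ⬝ᵥ (M⁻¹ *ᵥ (z - y))) / (2 * T)))
        = Real.exp (-(1/2) * (z ⬝ᵥ (Q *ᵥ z)) + (C *ᵥ y) ⬝ᵥ z)
            * Real.exp (-((k/2) * (y ⬝ᵥ (M⁻¹ *ᵥ y)))) := by
      intro z
      rw [← Real.exp_add]
      congr 1
      have e3 : (C *ᵥ y) ⬝ᵥ z = k * (z ⬝ᵥ (M⁻¹ *ᵥ y)) := by
        rw [hC, Matrix.smul_mulVec, smul_dotProduct, smul_eq_mul,
          dotProduct_comm]
      rw [expand_quad hMis z y, e2 z, e3, hk]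
      field_simp
      ring
    simp_rw [hexp1, integral_mul_const]
    rw [gaussA hQ (C *ᵥ y), quad_comp C Q⁻¹ hCs y, mul_assoc, ← Real.exp_add]
  -- pointwise form of the integrand
  have hpoint : ∀ y : Fin d → ℝ, kerKM S M T β x y * gaussPDF μk Sk y
      = (((2*π) ^ ((d:ℝ)/2) * Q.det ^ (-(1:ℝ)/2))⁻¹
            * ((2 * π) ^ (-(d:ℝ) / 2) * Sk.det ^ (-(1:ℝ)/2))
          * Real.exp (-(1/2) * (x ⬝ᵥ (Q *ᵥ x)) - (1/2) * (μk ⬝ᵥ (Sk⁻¹ *ᵥ μk))))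
        * Real.exp (-(1/2) * (y ⬝ᵥ (R *ᵥ y)) + (C *ᵥ x + Sk⁻¹ *ᵥ μk) ⬝ᵥ y) := by
    intro y
    rw [kerKM, gaussPDF, hden y, exp_div_mul]
    have q1 : y ⬝ᵥ (R *ᵥ y) = y ⬝ᵥ ((C * Q⁻¹ * C) *ᵥ y) + y ⬝ᵥ (Sk⁻¹ *ᵥ y) := by
      rw [hRdef, Matrix.add_mulVec, dotProduct_add]
    have q2 : (C *ᵥ x + Sk⁻¹ *ᵥ μk) ⬝ᵥ y
        = k * (x ⬝ᵥ (M⁻¹ *ᵥ y)) + μk ⬝ᵥ (Sk⁻¹ *ᵥ y) := by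
      rw [add_dotProduct]
      congr 1
      · rw [hC, Matrix.smul_mulVec, smul_dotProduct, smul_eq_mul,
          ← dp_lin M⁻¹ hMis]
      · rw [← dp_lin Sk⁻¹ hSkis]
    have hscal : -(β / 2) * ((1 / 2) * (x ⬝ᵥ (S⁻¹ *ᵥ x)) +
          ((x - y) ⬝ᵥ (M⁻¹ *ᵥ (x - y))) / (2 * T))
        - ((1/2) * (y ⬝ᵥ ((C * Q⁻¹ * C) *ᵥ y)) + -((k/2) * (y ⬝ᵥ (M⁻¹ *ᵥ y))))
        + (-(1 / 2) * ((y - μk) ⬝ᵥ (Sk⁻¹ *ᵥ (y - μk))))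
        = (-(1/2) * (x ⬝ᵥ (Q *ᵥ x)) - (1/2) * (μk ⬝ᵥ (Sk⁻¹ *ᵥ μk)))
          + (-(1/2) * (y ⬝ᵥ (R *ᵥ y)) + (C *ᵥ x + Sk⁻¹ *ᵥ μk) ⬝ᵥ y) := by
      rw [expand_quad hMis x y, expand_quad hSkis y μk, e2 x, q1, q2,
        dp_symm hSkis y μk, hk]
      field_simp
      ring
    rw [hscal, Real.exp_add]
    ring
  simp only [hpoint]
  rw [integral_const_mul, gaussA hR (C *ᵥ x + Sk⁻¹ *ᵥ μk), gaussPDF, hm, hSeq,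
    Matrix.inv_eq_right_inv idW, hSdet]
  -- the exponent identity
  have p3 : (C *ᵥ x) ⬝ᵥ (R⁻¹ *ᵥ (Sk⁻¹ *ᵥ μk)) = x ⬝ᵥ ((C * (R⁻¹ * Sk⁻¹)) *ᵥ μk) := by
    rw [Matrix.mulVec_mulVec, ← dp_lin C hCs, Matrix.mulVec_mulVec]
  have hbig : (-(1/2) * (x ⬝ᵥ (Q *ᵥ x)) - (1/2) * (μk ⬝ᵥ (Sk⁻¹ *ᵥ μk)))
        + (1/2) * ((C *ᵥ x + Sk⁻¹ *ᵥ μk) ⬝ᵥ (R⁻¹ *ᵥ (C *ᵥ x + Sk⁻¹ *ᵥ μk)))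
      = -(1 / 2) * ((x - (Q⁻¹ * C) *ᵥ μk) ⬝ᵥ (W *ᵥ (x - (Q⁻¹ * C) *ᵥ μk))) := by
    have p1 := quad_comp C R⁻¹ hCs x
    have p2 := quad_comp Sk⁻¹ R⁻¹ hSkis μk
    have p4 : (Sk⁻¹ *ᵥ μk) ⬝ᵥ (R⁻¹ *ᵥ (C *ᵥ x)) = x ⬝ᵥ ((C * (R⁻¹ * Sk⁻¹)) *ᵥ μk) := by
      rw [dp_symm hRis, p3]
    have p5 : x ⬝ᵥ (W *ᵥ ((Q⁻¹ * C) *ᵥ μk)) = x ⬝ᵥ ((C * (R⁻¹ * Sk⁻¹)) *ᵥ μk) := by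
      rw [Matrix.mulVec_mulVec, id3]
    have p6 : ((Q⁻¹ * C) *ᵥ μk) ⬝ᵥ (W *ᵥ ((Q⁻¹ * C) *ᵥ μk))
        = μk ⬝ᵥ (Sk⁻¹ *ᵥ μk) - μk ⬝ᵥ ((Sk⁻¹ * R⁻¹ * Sk⁻¹) *ᵥ μk) := by
      rw [quad_comp' (Q⁻¹ * C) W μk, Matrix.transpose_mul, hQis, hCs, id4,
        Matrix.sub_mulVec, dotProduct_sub]
    have p7 : x ⬝ᵥ (W *ᵥ x) = x ⬝ᵥ (Q *ᵥ x) - x ⬝ᵥ ((C * R⁻¹ * C) *ᵥ x) := by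
      rw [hWdef, Matrix.sub_mulVec, dotProduct_sub]
    rw [expand_quad hWs x ((Q⁻¹ * C) *ᵥ μk), Matrix.mulVec_add, dotProduct_add,
      add_dotProduct, add_dotProduct, p1, p2, p3, p4, p5, p6, p7]
    ring
  rw [← hbig, Real.exp_add]
  -- the constants identity
  have h2π : (0:ℝ) < 2*π := by positivity
  have hdQ : (0:ℝ) < Q.det := hQ.det_pos
  have hdR : (0:ℝ) < R.det := hR.det_pos
  have hdSk : (0:ℝ) < Sk.det := hSk.det_pos
  have hnegd : (-(d:ℝ)/2) = -((d:ℝ)/2) := by ring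
  have hneg1 : (-(1:ℝ)/2) = -((1:ℝ)/2) := by ring
  have hconst : ((2*π) ^ ((d:ℝ)/2) * Q.det ^ (-(1:ℝ)/2))⁻¹
        * ((2 * π) ^ (-(d:ℝ) / 2) * Sk.det ^ (-(1:ℝ)/2))
        * ((2*π) ^ ((d:ℝ)/2) * R.det ^ (-(1:ℝ)/2))
      = (2 * π) ^ (-(d:ℝ) / 2) * (Sk.det * R.det * Q.det⁻¹) ^ (-(1:ℝ)/2) := by
    have hprod : (0:ℝ) ≤ Sk.det * R.det := mul_nonneg hdSk.le hdR.le
    have hQinv : (0:ℝ) ≤ Q.det⁻¹ := inv_nonneg.2 hdQ.le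
    rw [hnegd, hneg1, Real.rpow_neg h2π.le, Real.rpow_neg hdQ.le, Real.rpow_neg hdSk.le,
      Real.rpow_neg hdR.le, Real.rpow_neg (mul_nonneg hprod hQinv),
      Real.mul_rpow hprod hQinv,
      Real.mul_rpow hdSk.le hdR.le, Real.inv_rpow hdQ.le]
    exact const_id _ _ _ _ (Real.rpow_pos_of_pos h2π _).ne' (Real.rpow_pos_of_pos hdSk _).ne'
      (Real.rpow_pos_of_pos hdR _).ne' (Real.rpow_pos_of_pos hdQ _).ne'
  rw [← hconst]
  ring
end

section
/- Let V : ℝ^d → ℝ be differentiable and μ-strongly convex relative to M^{-1} (meaning ⟨∇V(x) - ∇V(y), x - y⟩ ≥ μ (x-y)ᵀ M^{-1} (x-y) for all x,y), minimized at x̂. Let x₁,...,x_N ∈ ℝ^d, X = [x₁ ... x_N] ∈ ℝ^{d×N}, X̂ = x̂𝟏_Nᵀ, P any row-stochastic N×N matrix, T > 0, and Δ = -½ M ∇V(X) + (1/(2T))(X - X Pᵀ), where ∇V(X) applies ∇V columnwise. Then ⟨Δ, M^{-1}(X - X̂)⟩_Frob ≤ ‖X - X̂‖_{2,M} ( -μ/2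 · ‖X - X̂‖_{2,M} + (1+√N)/(2T) · ‖X - (1/N) X 𝟏_N 𝟏_Nᵀ‖_{2,M} ), where ‖A‖_{2,M}² = Tr(Aᵀ M^{-1} A). -/
open Matrix
open scoped RealInnerProductSpace

section AuxCDI

private lemma trace_transpose_mul_eq {α β : Type*} [Fintype α] [Fintype β]
    (C D : Matrix α β ℝ) : (Cᵀ * D).trace = ∑ j, ∑ i, C i j * D i j := by
  simp [Matrix.trace, Matrix.diag, Matrix.mul_apply]

private lemma cs_double {α β : Type*} [Fintype α] [Fintype β] (f g : α → β → ℝ) :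
    (∑ j, ∑ i, f i j * g i j) ≤
      Real.sqrt (∑ j, ∑ i, f i j ^ 2) * Real.sqrt (∑ j, ∑ i, g i j ^ 2) := by
  have := Real.sum_mul_le_sqrt_mul_sqrt (Finset.univ : Finset (β × α))
      (fun p => f p.2 p.1) (fun p => g p.2 p.1)
  simpa [Fintype.sum_prod_type] using this

private lemma frob_submul {α β γ : Type*} [Fintype α] [Fintype β] [Fintype γ]
    (C : Matrix α β ℝ) (Q : Matrix β γ ℝ) :
    (∑ j, ∑ i, ((C * Q) i j) ^ 2) ≤
      (∑ j, ∑ i, (C i j) ^ 2) * (∑ j, ∑ i, (Q i j) ^ 2) := by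
  have h1 : ∀ (i : α) (j : γ), ((C * Q) i j) ^ 2 ≤
      (∑ k, (C i k) ^ 2) * (∑ k, (Q k j) ^ 2) := by
    intro i j
    rw [Matrix.mul_apply]
    exact Finset.sum_mul_sq_le_sq_mul_sq _ _ _
  calc (∑ j, ∑ i, ((C * Q) i j) ^ 2)
      ≤ ∑ j : γ, ∑ i : α, (∑ k, (C i k) ^ 2) * (∑ k, (Q k j) ^ 2) :=
        Finset.sum_le_sum fun j _ => Finset.sum_le_sum fun i _ => h1 i j
    _ = (∑ i : α, ∑ k : β, (C i k) ^ 2) * (∑ j : γ, ∑ k : β, (Q k j) ^ 2) := by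
        simp_rw [← Finset.sum_mul, ← Finset.mul_sum]
    _ = (∑ j, ∑ i, (C i j) ^ 2) * (∑ j, ∑ i, (Q i j) ^ 2) := by
        congr 1
        rw [Finset.sum_comm]

end AuxCDI

/-- Scaled Frobenius norm `‖A‖_{2,M} = √Tr(Aᵀ M⁻¹ A)`. -/
noncomputable def scaledNorm {d N : ℕ} (M : Matrix (Fin d) (Fin d) ℝ)
    (A : Matrix (Fin d) (Fin N) ℝ) : ℝ :=
  Real.sqrt (Aᵀ * M⁻¹ * A).trace

/-- Contraction–diffusion inequality: if `V` is differentiable and `μ`-strongly convex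
relative to `M⁻¹` (i.e. `⟨∇V(x) - ∇V(y), x-y⟩ ≥ μ (x-y)ᵀ M⁻¹ (x-y)`), minimized at `x̂`,
`P` is row-stochastic and `Δ = -½ M ∇V(X) + (1/(2T))(X - X Pᵀ)`, then
`⟨Δ, M⁻¹(X - X̂)⟩_F ≤ ‖X - X̂‖_{2,M} (-μ/2 ‖X - X̂‖_{2,M}
  + (1+√N)/(2T) ‖X - (1/N) X 𝟏𝟏ᵀ‖_{2,M})`. -/
theorem contraction_diffusion_inequality {d N : ℕ} (hN : 0 < N)
    (M : Matrix (Fin d) (Fin d) ℝ) (hM : M.PosDef)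
    (V : EuclideanSpace ℝ (Fin d) → ℝ) (hV : Differentiable ℝ V)
    (μ T : ℝ) (hμ : 0 < μ) (hT : 0 < T)
    (hconv : ∀ x y : EuclideanSpace ℝ (Fin d),
      ⟪gradient V x - gradient V y, x - y⟫ ≥
        μ * ((fun i => x i - y i) ⬝ᵥ (M⁻¹ *ᵥ fun i => x i - y i)))
    (xhat : EuclideanSpace ℝ (Fin d)) (hmin : ∀ y, V xhat ≤ V y)
    (P : Matrix (Fin N) (Fin N) ℝ)
    (hPpos : ∀ i j, 0 ≤ P i j) (hProw : ∀ i, ∑ j, P i j = 1)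
    (X : Matrix (Fin d) (Fin N) ℝ) :
    (((-(1 / 2 : ℝ)) • (M * Matrix.of fun i j => gradient V (WithLp.toLp 2 fun k => X k j) i) +
        (1 / (2 * T)) • (X - X * Pᵀ))ᵀ *
      (M⁻¹ * (X - Matrix.of fun i (_ : Fin N) => xhat i))).trace ≤
    scaledNorm M (X - Matrix.of fun i (_ : Fin N) => xhat i) *
      (-(μ / 2) * scaledNorm M (X - Matrix.of fun i (_ : Fin N) => xhat i) +
        (1 + Real.sqrt N) / (2 * T) *
          scaledNorm M (X - Matrix.of fun i (_ : Fin N) => (1 / (N : ℝ)) * ∑ k, X i k)) := by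
  classical
  set Xh : Matrix (Fin d) (Fin N) ℝ := Matrix.of fun i (_ : Fin N) => xhat i with hXh
  set Xb : Matrix (Fin d) (Fin N) ℝ :=
    Matrix.of fun i (_ : Fin N) => (1 / (N : ℝ)) * ∑ k, X i k with hXb
  set G : Matrix (Fin d) (Fin N) ℝ :=
    Matrix.of fun i j => gradient V (WithLp.toLp 2 fun k => X k j) i with hG
  set Y : Matrix (Fin d) (Fin N) ℝ := X - Xh with hYdef
  set Z : Matrix (Fin d) (Fin N) ℝ := X - Xb with hZdef
  have hMdet : IsUnit M.det := hM.det_pos.ne'.isUnit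
  have hMT : Mᵀ = M := by
    have h := hM.isHermitian.eq
    rwa [Matrix.conjTranspose_eq_transpose_of_trivial] at h
  have hMinv : (M⁻¹).PosDef := hM.inv
  open scoped MatrixOrder in
  set S := CFC.sqrt (M⁻¹) with hSdef
  have hSS : S * S = M⁻¹ := by
    open scoped MatrixOrder in exact CFC.sqrt_mul_sqrt_self _ hMinv.posSemidef.nonneg
  have hST : Sᵀ = S := by
    have h := by open scoped MatrixOrder in exact (CFC.sqrt_nonneg (M⁻¹)).posSemidef.1.eq
    rwa [Matrix.conjTranspose_eq_transpose_of_trivial] at h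
  have f2 : ∀ A B : Matrix (Fin d) (Fin N) ℝ,
      (Aᵀ * (M⁻¹ * B)).trace = ∑ j, ∑ i, (S * A) i j * (S * B) i j := by
    intro A B
    have h : Aᵀ * (M⁻¹ * B) = (S * A)ᵀ * (S * B) := by
      rw [Matrix.transpose_mul, hST, ← hSS]
      simp [Matrix.mul_assoc]
    rw [h, trace_transpose_mul_eq]
  have f3 : ∀ A : Matrix (Fin d) (Fin N) ℝ,
      scaledNorm M A = Real.sqrt (∑ j, ∑ i, ((S * A) i j) ^ 2) := by
    intro A
    rw [scaledNorm, Matrix.mul_assoc, f2]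
    congr 1
    exact Finset.sum_congr rfl fun j _ => Finset.sum_congr rfl fun i _ => (sq _).symm
  have hnonneg : ∀ A : Matrix (Fin d) (Fin N) ℝ, 0 ≤ scaledNorm M A :=
    fun A => Real.sqrt_nonneg _
  have hsq : ∀ A : Matrix (Fin d) (Fin N) ℝ,
      (scaledNorm M A) ^ 2 = (Aᵀ * (M⁻¹ * A)).trace := by
    intro A
    rw [scaledNorm, Matrix.mul_assoc, Real.sq_sqrt]
    rw [f2]
    apply Finset.sum_nonneg; intro j _
    apply Finset.sum_nonneg; intro i _
    exact mul_self_nonneg _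
  have f4 : ∀ A B : Matrix (Fin d) (Fin N) ℝ,
      (Aᵀ * (M⁻¹ * B)).trace ≤ scaledNorm M A * scaledNorm M B := by
    intro A B
    rw [f2, f3, f3]
    exact cs_double _ _
  have f5 : ∀ (A : Matrix (Fin d) (Fin N) ℝ) (Q : Matrix (Fin N) (Fin N) ℝ),
      scaledNorm M (A * Q) ≤ scaledNorm M A * Real.sqrt (∑ j, ∑ i, (Q i j) ^ 2) := by
    intro A Q
    rw [f3, f3, ← Matrix.mul_assoc]
    calc Real.sqrt (∑ j, ∑ i, ((S * A * Q) i j) ^ 2)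
        ≤ Real.sqrt ((∑ j, ∑ i, ((S * A) i j) ^ 2) * (∑ j, ∑ i, (Q i j) ^ 2)) :=
          Real.sqrt_le_sqrt (frob_submul _ _)
      _ = _ := Real.sqrt_mul (by positivity) _
  have hgrad0 : gradient V xhat = 0 := by
    have hloc : IsLocalMin V xhat := Filter.Eventually.of_forall hmin
    have h0 := hloc.fderiv_eq_zero
    simp [gradient, h0]
  -- per-column strong convexity
  have hkey : ∀ j : Fin N, μ * ((Yᵀ * (M⁻¹ * Y)) j j) ≤ ∑ i, G i j * Y i j := by
    intro j
    set v : EuclideanSpace ℝ (Fin d) := (WithLp.toLp 2 fun k => X k j) with hv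
    have h := hconv v xhat
    rw [hgrad0, sub_zero] at h
    have e1 : μ * ((fun i => v i - xhat i) ⬝ᵥ M⁻¹ *ᵥ fun i => v i - xhat i) =
        μ * ((Yᵀ * (M⁻¹ * Y)) j j) := by
      congr 1 <;> simp only [Matrix.mul_apply, Matrix.transpose_apply, dotProduct,
        Matrix.mulVec, hYdef, hXh, hv, Matrix.sub_apply, Matrix.of_apply]
    have e2 : (⟪gradient V v, v - xhat⟫ : ℝ) = ∑ i, G i j * Y i j := by
      rw [PiLp.inner_apply]
      refine Finset.sum_congr rfl fun i _ => ?_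
      simp [RCLike.inner_apply, PiLp.sub_apply, hG, hYdef, hXh, hv, mul_comm]
    rw [e2] at h
    rw [← e1]
    exact h
  -- first term
  have ht1 : μ * (scaledNorm M Y) ^ 2 ≤ ((M * G)ᵀ * (M⁻¹ * Y)).trace := by
    have e1 : (M * G)ᵀ * (M⁻¹ * Y) = Gᵀ * Y := by
      rw [Matrix.transpose_mul, hMT, Matrix.mul_assoc, ← Matrix.mul_assoc M,
        Matrix.mul_nonsing_inv _ hMdet, Matrix.one_mul]
    rw [e1, trace_transpose_mul_eq, hsq Y]
    have : (Yᵀ * (M⁻¹ * Y)).trace = ∑ j, (Yᵀ * (M⁻¹ * Y)) j j := rfl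
    rw [this, Finset.mul_sum]
    exact Finset.sum_le_sum fun j _ => hkey j
  -- consensus identity
  have hZP : X - X * Pᵀ = Z + Z * (-Pᵀ) := by
    have hXbP : Xb * Pᵀ = Xb := by
      ext i j
      simp only [Matrix.mul_apply, hXb, Matrix.of_apply, Matrix.transpose_apply]
      rw [← Finset.mul_sum, hProw j, mul_one]
    rw [Matrix.mul_neg, ← sub_eq_add_neg, hZdef, Matrix.sub_mul, hXbP]
    abel
  -- row-stochastic Frobenius bound
  have hPfrob : Real.sqrt (∑ j, ∑ i, ((-Pᵀ : Matrix (Fin N) (Fin N) ℝ) i j) ^ 2)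
      ≤ Real.sqrt N := by
    apply Real.sqrt_le_sqrt
    have hrow : ∀ j : Fin N, (∑ i, (P j i) ^ 2) ≤ 1 := by
      intro j
      calc ∑ i, (P j i) ^ 2 ≤ ∑ i, P j i * 1 := by
            apply Finset.sum_le_sum
            intro i _
            rw [sq]
            apply mul_le_mul_of_nonneg_left _ (hPpos j i)
            rw [← hProw j]
            exact Finset.single_le_sum (fun k _ => hPpos j k) (Finset.mem_univ i)
        _ = 1 := by rw [← Finset.sum_mul, hProw j, one_mul]
    calc (∑ j, ∑ i, ((-Pᵀ : Matrix (Fin N) (Fin N) ℝ) i j) ^ 2)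
        = ∑ j, ∑ i, (P j i) ^ 2 := by
          simp [Matrix.neg_apply, Matrix.transpose_apply]
      _ ≤ ∑ _j : Fin N, (1 : ℝ) := Finset.sum_le_sum fun j _ => hrow j
      _ = N := by simp
  -- second term
  have ht2 : ((X - X * Pᵀ)ᵀ * (M⁻¹ * Y)).trace ≤
      scaledNorm M Z * scaledNorm M Y * (1 + Real.sqrt N) := by
    rw [hZP, Matrix.transpose_add, Matrix.add_mul, Matrix.trace_add]
    have b1 : (Zᵀ * (M⁻¹ * Y)).trace ≤ scaledNorm M Z * scaledNorm M Y := f4 Z Y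
    have b2 : ((Z * (-Pᵀ))ᵀ * (M⁻¹ * Y)).trace ≤
        scaledNorm M Z * Real.sqrt N * scaledNorm M Y := by
      calc ((Z * (-Pᵀ))ᵀ * (M⁻¹ * Y)).trace
          ≤ scaledNorm M (Z * (-Pᵀ)) * scaledNorm M Y := f4 _ Y
        _ ≤ scaledNorm M Z * Real.sqrt N * scaledNorm M Y := by
            apply mul_le_mul_of_nonneg_right _ (hnonneg Y)
            exact (f5 Z (-Pᵀ)).trans
              (mul_le_mul_of_nonneg_left hPfrob (hnonneg Z))
    nlinarith [hnonneg Z, hnonneg Y]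
  -- assemble
  have hLHS : (((-(1 / 2 : ℝ)) • (M * G) + (1 / (2 * T)) • (X - X * Pᵀ))ᵀ *
      (M⁻¹ * Y)).trace =
      (-(1 / 2 : ℝ)) * ((M * G)ᵀ * (M⁻¹ * Y)).trace +
        (1 / (2 * T)) * ((X - X * Pᵀ)ᵀ * (M⁻¹ * Y)).trace := by
    rw [Matrix.transpose_add, Matrix.transpose_smul, Matrix.transpose_smul,
      Matrix.add_mul, Matrix.smul_mul, Matrix.smul_mul, Matrix.trace_add,
      Matrix.trace_smul, Matrix.trace_smul]
    simp [smul_eq_mul]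
  rw [hLHS]
  have h2T : (0 : ℝ) < 1 / (2 * T) := by positivity
  have step1 : (-(1 / 2 : ℝ)) * ((M * G)ᵀ * (M⁻¹ * Y)).trace ≤
      (-(1 / 2 : ℝ)) * (μ * (scaledNorm M Y) ^ 2) := by linarith [ht1]
  have step2 : (1 / (2 * T)) * ((X - X * Pᵀ)ᵀ * (M⁻¹ * Y)).trace ≤
      (1 / (2 * T)) * (scaledNorm M Z * scaledNorm M Y * (1 + Real.sqrt N)) :=
    mul_le_mul_of_nonneg_left ht2 h2T.le
  have hfin : (-(1 / 2 : ℝ)) * (μ * (scaledNorm M Y) ^ 2) +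
      (1 / (2 * T)) * (scaledNorm M Z * scaledNorm M Y * (1 + Real.sqrt N)) =
      scaledNorm M Y * (-(μ / 2) * scaledNorm M Y +
        (1 + Real.sqrt N) / (2 * T) * scaledNorm M Z) := by
    field_simp
  linarith [step1, step2]
end
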